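/- Let Q : ℝⁿ × ℝᵐ ⇉ ℝᵐ have closed graph and have the SCD property at ((x, y), z) ∈ gph Q, and let f : ℝⁿ × ℝᵐ → ℝᵐ be continuously differentiable. Then F := f + Q has the SCD property at ((x, y), f(x, y) + z), and 𝒮F((x,y), f(x,y)+z) = { [[I_{n+m}, 0], [∇f(x,y), I_m]] · L : L ∈ 𝒮Q((x,y), z) }, and 𝒮*F((x,y), f(x,y)+z) = { [[I_m, 0], [∇f(x,y)ᵀ, I_{n+m}]] · L* : L* ∈ 𝒮*Q((x,y), z) }. -/

import Mathlib

open Filter Topology Set Module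

/-- Join a pair into a Euclidean space on a sum index type. -/
noncomputable def emb {α β : Type*} [Fintype α] [Fintype β]
    (x : EuclideanSpace ℝ α) (y : EuclideanSpace ℝ β) : EuclideanSpace ℝ (α ⊕ β) :=
  WithLp.toLp 2 (fun s => Sum.elim (fun i => x i) (fun j => y j) s)

/-- Orthogonal projection onto a subspace as an endomap. -/
noncomputable def projCLM {ι : Type*} [Fintype ι] (L : Submodule ℝ (EuclideanSpace ℝ ι)) :
    EuclideanSpace ℝ ι →L[ℝ] EuclideanSpace ℝ ι :=
  L.subtypeL.comp (Submodule.orthogonalProjectionOnto L)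

/-- The projection metric `d(L₁,L₂) = ‖P₁ - P₂‖` on subspaces. -/
noncomputable def dZ {ι : Type*} [Fintype ι] (L₁ L₂ : Submodule ℝ (EuclideanSpace ℝ ι)) : ℝ :=
  ‖projCLM L₁ - projCLM L₂‖

/-- The SC derivative of a set `S` (a graph) at `w ∈ S`, for dimension `d`: all `d`-dimensional
subspaces arising as limits (in the projection metric) of tangent spaces at points of `S` where
`S` is graphically smooth of dimension `d`. -/
noncomputable def SCderivSet {ι : Type*} [Fintype ι] (S : Set (EuclideanSpace ℝ ι))
    (w : EuclideanSpace ℝ ι) (d : ℕ) : Set (Submodule ℝ (EuclideanSpace ℝ ι)) :=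
  {L | finrank ℝ L = d ∧
    ∃ (wk : ℕ → EuclideanSpace ℝ ι) (Lk : ℕ → Submodule ℝ (EuclideanSpace ℝ ι)),
      (∀ k, wk k ∈ S ∧ finrank ℝ (Lk k) = d ∧
        ((Lk k : Set (EuclideanSpace ℝ ι)) = tangentConeAt ℝ S (wk k))) ∧
      Tendsto wk atTop (𝓝 w) ∧ Tendsto (fun k => dZ (Lk k) L) atTop (𝓝 0)}

/-- The linear map `(a, b) ↦ (b, -a)`, used to define the adjoint subspace. -/
noncomputable def swapNeg (α β : Type*) [Fintype α] [Fintype β] :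
    EuclideanSpace ℝ (β ⊕ α) →ₗ[ℝ] EuclideanSpace ℝ (α ⊕ β) where
  toFun w := WithLp.toLp 2 (fun s => Sum.elim (fun i : α => w (Sum.inr i)) (fun j : β => -(w (Sum.inl j))) s)
  map_add' u v := by
    ext s
    cases s with
    | inl i => show (u + v) (Sum.inr i) = u (Sum.inr i) + v (Sum.inr i); rfl
    | inr j =>
        show -((u + v) (Sum.inl j)) = -(u (Sum.inl j)) + -(v (Sum.inl j))
        show -((u (Sum.inl j)) + (v (Sum.inl j))) = _
        ring
  map_smul' c u := by
    ext s
    cases s with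
    | inl i => rfl
    | inr j =>
        show -((c • u) (Sum.inl j)) = c * -(u (Sum.inl j))
        show -(c * (u (Sum.inl j))) = c * -(u (Sum.inl j))
        ring

/-- The adjoint subspace `L* = {(-v*, u*) | (u*, v*) ∈ L^⊥}`. -/
noncomputable def adjSub {α β : Type*} [Fintype α] [Fintype β]
    (L : Submodule ℝ (EuclideanSpace ℝ (α ⊕ β))) : Submodule ℝ (EuclideanSpace ℝ (β ⊕ α)) :=
  Lᗮ.comap (swapNeg α β)

noncomputable def p1 {α β : Type*} [Fintype α] [Fintype β]
    (w : EuclideanSpace ℝ (α ⊕ β)) : EuclideanSpace ℝ α := WithLp.toLp 2 (fun i => w (Sum.inl i))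

noncomputable def p2 {α β : Type*} [Fintype α] [Fintype β]
    (w : EuclideanSpace ℝ (α ⊕ β)) : EuclideanSpace ℝ β := WithLp.toLp 2 (fun j => w (Sum.inr j))

/-- The linear map `[[I, 0], [D, I]] : (u, v) ↦ (u, D u + v)` on the sum Euclidean space. -/
noncomputable def shearMap {α β : Type*} [Fintype α] [Fintype β]
    (D : EuclideanSpace ℝ α →L[ℝ] EuclideanSpace ℝ β) :
    EuclideanSpace ℝ (α ⊕ β) →ₗ[ℝ] EuclideanSpace ℝ (α ⊕ β) :=
  { toFun := fun w => emb (p1 w) (D (p1 w) + p2 w)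
    map_add' := by
      intro u v
      have h1 : ∀ w w' : EuclideanSpace ℝ (α ⊕ β), p1 (w + w') = p1 w + p1 w' := fun _ _ => rfl
      ext s
      cases s with
      | inl i => show (u + v) (Sum.inl i) = u (Sum.inl i) + v (Sum.inl i); rfl
      | inr j =>
          show (D (p1 (u + v)) + p2 (u + v)) j = (D (p1 u) + p2 u) j + (D (p1 v) + p2 v) j
          rw [h1, map_add]
          show (D (p1 u)) j + (D (p1 v)) j + ((u (Sum.inr j)) + (v (Sum.inr j))) =
            ((D (p1 u)) j + u (Sum.inr j)) + ((D (p1 v)) j + v (Sum.inr j))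
          ring
    map_smul' := by
      intro c u
      have h1 : p1 (c • u) = c • p1 u := rfl
      ext s
      cases s with
      | inl i => rfl
      | inr j =>
          show (D (p1 (c • u)) + p2 (c • u)) j = c * ((D (p1 u) + p2 u) j)
          rw [h1, map_smul]
          show c * (D (p1 u)) j + c * (u (Sum.inr j)) = c * ((D (p1 u)) j + u (Sum.inr j))
          ring }

/-- The adjoint SC derivative of a graph `S` at `w`. -/
noncomputable def adjSCderivSet {α β : Type*} [Fintype α] [Fintype β]
    (S : Set (EuclideanSpace ℝ (α ⊕ β))) (w : EuclideanSpace ℝ (α ⊕ β)) (d : ℕ) :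
    Set (Submodule ℝ (EuclideanSpace ℝ (β ⊕ α))) :=
  {M | ∃ L ∈ SCderivSet S w d, M = adjSub L}

section AuxBasic

variable {α β : Type*} [Fintype α] [Fintype β]

lemma p1_emb (x : EuclideanSpace ℝ α) (y : EuclideanSpace ℝ β) : p1 (emb x y) = x := rfl

lemma p2_emb (x : EuclideanSpace ℝ α) (y : EuclideanSpace ℝ β) : p2 (emb x y) = y := rfl

lemma emb_p1_p2 (w : EuclideanSpace ℝ (α ⊕ β)) : emb (p1 w) (p2 w) = w := by
  ext s; cases s <;> rfl

lemma shearMap_apply (D : EuclideanSpace ℝ α →L[ℝ] EuclideanSpace ℝ β)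
    (w : EuclideanSpace ℝ (α ⊕ β)) : shearMap D w = emb (p1 w) (D (p1 w) + p2 w) := rfl

lemma shearMap_emb (D : EuclideanSpace ℝ α →L[ℝ] EuclideanSpace ℝ β)
    (x : EuclideanSpace ℝ α) (y : EuclideanSpace ℝ β) :
    shearMap D (emb x y) = emb x (D x + y) := rfl

lemma shear_neg_shear (D : EuclideanSpace ℝ α →L[ℝ] EuclideanSpace ℝ β)
    (w : EuclideanSpace ℝ (α ⊕ β)) : shearMap (-D) (shearMap D w) = w := by
  rw [shearMap_apply D, shearMap_emb]
  rw [show (-D) (p1 w) = -(D (p1 w)) from rfl]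
  rw [neg_add_cancel_left, emb_p1_p2]

lemma shear_shear_neg (D : EuclideanSpace ℝ α →L[ℝ] EuclideanSpace ℝ β)
    (w : EuclideanSpace ℝ (α ⊕ β)) : shearMap D (shearMap (-D) w) = w := by
  have := shear_neg_shear (-D) w
  rwa [neg_neg] at this

end AuxBasic

section CLMs

variable {α β : Type*} [Fintype α] [Fintype β]

/-- `p1` as a continuous linear map. -/
noncomputable def p1CLM (α β : Type*) [Fintype α] [Fintype β] :
    EuclideanSpace ℝ (α ⊕ β) →L[ℝ] EuclideanSpace ℝ α :=
  LinearMap.toContinuousLinearMap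
    { toFun := p1, map_add' := fun _ _ => rfl, map_smul' := fun _ _ => rfl }

@[simp] lemma p1CLM_apply (w : EuclideanSpace ℝ (α ⊕ β)) : p1CLM α β w = p1 w := rfl

/-- embedding into the second block as a continuous linear map. -/
noncomputable def inr2CLM (α β : Type*) [Fintype α] [Fintype β] :
    EuclideanSpace ℝ β →L[ℝ] EuclideanSpace ℝ (α ⊕ β) :=
  LinearMap.toContinuousLinearMap
    { toFun := fun y => emb 0 y
      map_add' := fun u v => by
        ext s
        cases s with
        | inl i => show (0 : ℝ) = 0 + 0; ring
        | inr j => rfl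
      map_smul' := fun c u => by
        ext s
        cases s with
        | inl i => show (0 : ℝ) = c * 0; ring
        | inr j => rfl }

@[simp] lemma inr2CLM_apply (y : EuclideanSpace ℝ β) : inr2CLM α β y = emb 0 y := rfl

/-- The shear map as a continuous linear map. -/
noncomputable def shearCLM (D : EuclideanSpace ℝ α →L[ℝ] EuclideanSpace ℝ β) :
    EuclideanSpace ℝ (α ⊕ β) →L[ℝ] EuclideanSpace ℝ (α ⊕ β) :=
  LinearMap.toContinuousLinearMap (shearMap D)

@[simp] lemma shearCLM_apply (D : EuclideanSpace ℝ α →L[ℝ] EuclideanSpace ℝ β)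
    (w : EuclideanSpace ℝ (α ⊕ β)) : shearCLM D w = shearMap D w := rfl

@[simp] lemma shearCLM_coe (D : EuclideanSpace ℝ α →L[ℝ] EuclideanSpace ℝ β) :
    (shearCLM D : EuclideanSpace ℝ (α ⊕ β) →ₗ[ℝ] EuclideanSpace ℝ (α ⊕ β)) = shearMap D :=
  LinearMap.coe_toContinuousLinearMap (shearMap D)

/-- The shear map as a linear equivalence. -/
noncomputable def shearEquiv (D : EuclideanSpace ℝ α →L[ℝ] EuclideanSpace ℝ β) :
    EuclideanSpace ℝ (α ⊕ β) ≃ₗ[ℝ] EuclideanSpace ℝ (α ⊕ β) :=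
  LinearEquiv.ofLinear (shearMap D) (shearMap (-D))
    (LinearMap.ext fun w => shear_shear_neg D w) (LinearMap.ext fun w => shear_neg_shear D w)

lemma finrank_map_shear (D : EuclideanSpace ℝ α →L[ℝ] EuclideanSpace ℝ β)
    (L : Submodule ℝ (EuclideanSpace ℝ (α ⊕ β))) :
    Module.finrank ℝ (Submodule.map (shearMap D) L) = Module.finrank ℝ L := by
  have : Submodule.map (shearMap D) L
      = Submodule.map (shearEquiv D : _ →ₗ[ℝ] _) L := rfl
  rw [this, LinearEquiv.finrank_map_eq]

lemma map_shear_map_neg_shear (D : EuclideanSpace ℝ α →L[ℝ] EuclideanSpace ℝ β)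
    (L : Submodule ℝ (EuclideanSpace ℝ (α ⊕ β))) :
    Submodule.map (shearMap D) (Submodule.map (shearMap (-D)) L) = L := by
  rw [← Submodule.map_comp]
  have : (shearMap D).comp (shearMap (-D))
      = (LinearMap.id : EuclideanSpace ℝ (α ⊕ β) →ₗ[ℝ] EuclideanSpace ℝ (α ⊕ β)) :=
    LinearMap.ext fun w => shear_shear_neg D w
  rw [this, Submodule.map_id]

/-- The function `w ↦ w + (0, g(p1 w))`. -/
noncomputable def phiF (g : EuclideanSpace ℝ α → EuclideanSpace ℝ β)
    (w : EuclideanSpace ℝ (α ⊕ β)) : EuclideanSpace ℝ (α ⊕ β) :=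
  w + inr2CLM α β (g (p1 w))

lemma phiF_emb (g : EuclideanSpace ℝ α → EuclideanSpace ℝ β) (x : EuclideanSpace ℝ α)
    (y : EuclideanSpace ℝ β) : phiF g (emb x y) = emb x (g x + y) := by
  ext s
  cases s with
  | inl i => show x i + (0 : ℝ) = x i; ring
  | inr j => show y j + g x j = g x j + y j; ring

@[simp] lemma p1_phiF (g : EuclideanSpace ℝ α → EuclideanSpace ℝ β)
    (w : EuclideanSpace ℝ (α ⊕ β)) : p1 (phiF g w) = p1 w := by
  ext i; show w (Sum.inl i) + (0 : ℝ) = w (Sum.inl i); ring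

lemma phiF_neg_phiF (g : EuclideanSpace ℝ α → EuclideanSpace ℝ β)
    (w : EuclideanSpace ℝ (α ⊕ β)) : phiF (fun x => -(g x)) (phiF g w) = w := by
  rw [← emb_p1_p2 w, phiF_emb, phiF_emb, neg_add_cancel_left]

lemma continuous_phiF {g : EuclideanSpace ℝ α → EuclideanSpace ℝ β} (hg : Continuous g) :
    Continuous (phiF g) :=
  continuous_id.add ((inr2CLM α β).continuous.comp (hg.comp (p1CLM α β).continuous))

lemma hasFDerivAt_phiF {g : EuclideanSpace ℝ α → EuclideanSpace ℝ β}
    {D : EuclideanSpace ℝ α →L[ℝ] EuclideanSpace ℝ β} {w : EuclideanSpace ℝ (α ⊕ β)}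
    (hg : HasFDerivAt g D (p1 w)) : HasFDerivAt (phiF g) (shearCLM D) w := by
  have h1 : HasFDerivAt (fun w' : EuclideanSpace ℝ (α ⊕ β) => g (p1 w'))
      (D.comp (p1CLM α β)) w := hg.comp w (p1CLM α β).hasFDerivAt
  have h2 : HasFDerivAt (phiF g)
      (ContinuousLinearMap.id ℝ _ + (inr2CLM α β).comp (D.comp (p1CLM α β))) w :=
    (hasFDerivAt_id w).add (((inr2CLM α β).hasFDerivAt.comp w h1))
  convert h2 using 1
  refine ContinuousLinearMap.ext fun v => ?_
  ext s
  cases s with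
  | inl i => show v (Sum.inl i) = v (Sum.inl i) + (0 : ℝ); ring
  | inr j => show D (p1 v) j + v (Sum.inr j) = v (Sum.inr j) + D (p1 v) j; ring

end CLMs

section TangentCone

variable {E F : Type*} [NormedAddCommGroup E] [NormedSpace ℝ E]
  [NormedAddCommGroup F] [NormedSpace ℝ F]

lemma tangentCone_image_subset {Φ : E → F} {A : E →L[ℝ] F} {S : Set E} {x : E}
    (h : HasFDerivAt Φ A x) :
    A '' tangentConeAt ℝ S x ⊆ tangentConeAt ℝ (Φ '' S) (Φ x) := by
  rintro _ ⟨v, hv, rfl⟩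
  obtain ⟨c, d, hd0, hd, hcd⟩ := mem_tangentConeAt_iff_exists_seq.mp hv
  refine mem_tangentConeAt_iff_exists_seq.mpr ⟨c, fun n => Φ (x + d n) - Φ x, ?_, ?_, ?_⟩
  · have hxd : Tendsto (fun n => x + d n) atTop (𝓝 x) := by
      simpa using tendsto_const_nhds.add hd0
    simpa using (h.continuousAt.tendsto.comp hxd).sub_const (Φ x)
  · filter_upwards [hd] with n hn
    exact ⟨x + d n, hn, by abel⟩
  · have hd0 : Tendsto d atTop (𝓝 0) := hd0
    have hxd : Tendsto (fun n => x + d n) atTop (𝓝 x) := by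
      simpa using tendsto_const_nhds.add hd0
    have hlittle : (fun n => Φ (x + d n) - Φ x - A (d n)) =o[atTop] d := by
      have h1 := h.isLittleO.comp_tendsto hxd
      simp only [Function.comp_def, add_sub_cancel_left] at h1
      exact h1
    have h2 : (fun n => c n • (Φ (x + d n) - Φ x - A (d n))) =o[atTop]
        fun n => c n • d n := by
      rw [Asymptotics.isLittleO_iff] at hlittle ⊢
      intro ε hε
      filter_upwards [hlittle hε] with n hn
      rw [norm_smul, norm_smul, mul_left_comm]
      exact mul_le_mul_of_nonneg_left hn (norm_nonneg (c n))
    have hO : (fun n => c n • d n) =O[atTop] (fun _ : ℕ => (1 : ℝ)) :=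
      hcd.isBigO_one ℝ
    have h3 : Tendsto (fun n => c n • (Φ (x + d n) - Φ x - A (d n))) atTop (𝓝 0) :=
      Asymptotics.isLittleO_one_iff ℝ |>.mp (h2.trans_isBigO hO)
    have h4 : Tendsto (fun n => c n • A (d n)) atTop (𝓝 (A v)) := by
      have := (A.continuous.tendsto v).comp hcd
      simp only [Function.comp_def] at this
      convert this using 2 with n
      exact (A.map_smul _ _).symm
    have := h3.add h4
    rw [zero_add] at this
    convert this using 2 with n
    rw [← smul_add]
    congr 1
    abel

lemma tangentCone_image_eq {Φ : E → F} {Ψ : F → E} {A : E →L[ℝ] F} {B : F →L[ℝ] E}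
    {S : Set E} {x : E} (hΦ : HasFDerivAt Φ A x) (hΨ : HasFDerivAt Ψ B (Φ x))
    (hinv : ∀ w, Ψ (Φ w) = w) (hAB : ∀ v, A (B v) = v) :
    tangentConeAt ℝ (Φ '' S) (Φ x) = A '' tangentConeAt ℝ S x := by
  apply Set.Subset.antisymm
  · intro v hv
    have h1 : B '' tangentConeAt ℝ (Φ '' S) (Φ x) ⊆ tangentConeAt ℝ S x := by
      have h2 := tangentCone_image_subset (S := Φ '' S) hΨ
      have h3 : Ψ '' (Φ '' S) = S := by
        rw [Set.image_image]
        simp only [hinv, Set.image_id']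
      rwa [h3, hinv] at h2
    exact ⟨B v, h1 ⟨v, hv, rfl⟩, hAB v⟩
  · exact tangentCone_image_subset hΦ

end TangentCone

section Proj

variable {ι : Type*} [Fintype ι]

lemma projCLM_apply_mem (L : Submodule ℝ (EuclideanSpace ℝ ι)) (x : EuclideanSpace ℝ ι) :
    projCLM L x ∈ L := (L.orthogonalProjectionOnto x).2

lemma projCLM_apply_of_mem (L : Submodule ℝ (EuclideanSpace ℝ ι)) {x : EuclideanSpace ℝ ι}
    (h : x ∈ L) : projCLM L x = x := by
  show L.starProjection x = x
  exact (Submodule.starProjection_eq_self_iff (K := L)).mpr h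

lemma isProj_projCLM (L : Submodule ℝ (EuclideanSpace ℝ ι)) :
    LinearMap.IsProj L ((projCLM L : EuclideanSpace ℝ ι →L[ℝ] EuclideanSpace ℝ ι) :
      EuclideanSpace ℝ ι →ₗ[ℝ] EuclideanSpace ℝ ι) :=
  ⟨fun x => projCLM_apply_mem L x, fun x hx => projCLM_apply_of_mem L hx⟩

lemma norm_projCLM_le (L : Submodule ℝ (EuclideanSpace ℝ ι)) : ‖projCLM L‖ ≤ 1 := by
  refine ContinuousLinearMap.opNorm_le_bound _ zero_le_one fun x => ?_
  rw [one_mul]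
  show ‖((L.orthogonalProjectionOnto x : L) : EuclideanSpace ℝ ι)‖ ≤ ‖x‖
  calc ‖((L.orthogonalProjectionOnto x : L) : EuclideanSpace ℝ ι)‖
      = ‖L.orthogonalProjectionOnto x‖ := rfl
    _ ≤ 1 * ‖x‖ := (L.orthogonalProjectionOnto).le_opNorm x |>.trans
        (by gcongr; exact Submodule.orthogonalProjectionOnto_norm_le L)
    _ = ‖x‖ := one_mul _

lemma isSelfAdjoint_projCLM (L : Submodule ℝ (EuclideanSpace ℝ ι)) :
    IsSelfAdjoint (projCLM L) := isSelfAdjoint_starProjection L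

lemma projCLM_mul_self (L : Submodule ℝ (EuclideanSpace ℝ ι)) :
    projCLM L * projCLM L = projCLM L := by
  refine ContinuousLinearMap.ext fun x => ?_
  show projCLM L (projCLM L x) = projCLM L x
  exact projCLM_apply_of_mem L (projCLM_apply_mem L x)

lemma trace_projCLM (L : Submodule ℝ (EuclideanSpace ℝ ι)) :
    LinearMap.trace ℝ (EuclideanSpace ℝ ι)
      ((projCLM L : EuclideanSpace ℝ ι →L[ℝ] EuclideanSpace ℝ ι) :
        EuclideanSpace ℝ ι →ₗ[ℝ] EuclideanSpace ℝ ι)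
      = (Module.finrank ℝ L : ℝ) :=
  (isProj_projCLM L).trace

end Proj

section DZconv

variable {ι : Type*} [Fintype ι]

local notation "𝔼" => EuclideanSpace ℝ ι

lemma tendsto_apply_clm {Tk : ℕ → (𝔼 →L[ℝ] 𝔼)} {T : 𝔼 →L[ℝ] 𝔼}
    (hT : Tendsto Tk atTop (𝓝 T)) {uk : ℕ → 𝔼} {u : 𝔼} (hu : Tendsto uk atTop (𝓝 u)) :
    Tendsto (fun k => Tk k (uk k)) atTop (𝓝 (T u)) := by
  have hc := (isBoundedBilinearMap_apply (𝕜 := ℝ) (E := 𝔼) (F := 𝔼)).continuous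
  exact (hc.tendsto (T, u)).comp (hT.prodMk_nhds hu)

lemma tendsto_projCLM_of_dZ {Lk : ℕ → Submodule ℝ 𝔼} {L : Submodule ℝ 𝔼}
    (h : Tendsto (fun k => dZ (Lk k) L) atTop (𝓝 0)) :
    Tendsto (fun k => projCLM (Lk k)) atTop (𝓝 (projCLM L)) :=
  tendsto_iff_norm_sub_tendsto_zero.mpr h

lemma proj_limit_ident {d : ℕ} {Ak : ℕ → (𝔼 →L[ℝ] 𝔼)} {A : 𝔼 →L[ℝ] 𝔼}
    (hA : Tendsto Ak atTop (𝓝 A))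
    {Lk : ℕ → Submodule ℝ 𝔼} {L : Submodule ℝ 𝔼}
    (hdk : ∀ k, Module.finrank ℝ (Submodule.map ((Ak k : 𝔼 →ₗ[ℝ] 𝔼)) (Lk k)) = d)
    (hdL : Module.finrank ℝ (Submodule.map ((A : 𝔼 →ₗ[ℝ] 𝔼)) L) = d)
    (hL : Tendsto (fun k => dZ (Lk k) L) atTop (𝓝 0))
    {R : 𝔼 →L[ℝ] 𝔼}
    (hR : Tendsto (fun j => projCLM (Submodule.map ((Ak j : 𝔼 →ₗ[ℝ] 𝔼)) (Lk j))) atTop (𝓝 R)) :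
    R = projCLM (Submodule.map ((A : 𝔼 →ₗ[ℝ] 𝔼)) L) := by
  set P : ℕ → (𝔼 →L[ℝ] 𝔼) :=
    fun j => projCLM (Submodule.map ((Ak j : 𝔼 →ₗ[ℝ] 𝔼)) (Lk j)) with hPdef
  -- self-adjointness of R
  have hPsa : ∀ j, ContinuousLinearMap.adjoint (P j) = P j := fun j =>
    (isSelfAdjoint_projCLM _).adjoint_eq
  have hRsa : IsSelfAdjoint R := by
    have hadj : Tendsto (fun j => ContinuousLinearMap.adjoint (P j)) atTop
        (𝓝 (ContinuousLinearMap.adjoint R)) :=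
      (((ContinuousLinearMap.adjoint (𝕜 := ℝ) (E := 𝔼) (F := 𝔼)).continuous.tendsto R).comp hR)
    have : Tendsto P atTop (𝓝 (ContinuousLinearMap.adjoint R)) := by
      simpa [hPsa] using hadj
    exact ContinuousLinearMap.isSelfAdjoint_iff'.mpr (tendsto_nhds_unique this hR)
  -- idempotence of R
  have hRidem : R * R = R := by
    have h1 : Tendsto (fun j => P j * P j) atTop (𝓝 (R * R)) := hR.mul hR
    have h2 : Tendsto (fun j => P j * P j) atTop (𝓝 R) := by
      have he : ∀ j, P j * P j = P j := fun j => projCLM_mul_self _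
      rw [funext he]
      exact hR
    exact tendsto_nhds_unique h1 h2
  have hRR : ∀ x, R (R x) = R x := fun x => ContinuousLinearMap.ext_iff.mp hRidem x
  -- R is the orthogonal projection onto its range
  set M : Submodule ℝ 𝔼 := LinearMap.range (R : 𝔼 →ₗ[ℝ] 𝔼) with hMdef
  have hproj : projCLM M = R := by
    refine ContinuousLinearMap.ext fun x => ?_
    show M.starProjection x = R x
    refine Submodule.eq_starProjection_of_mem_of_inner_eq_zero ⟨x, rfl⟩ ?_
    rintro _ ⟨z, rfl⟩
    have h0 : R (x - R x) = 0 := by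
      rw [map_sub, hRR, sub_self]
    have h1 : (inner ℝ (x - R x) (R z) : ℝ)
        = inner ℝ ((ContinuousLinearMap.adjoint R) (x - R x)) z :=
      (ContinuousLinearMap.adjoint_inner_left R z (x - R x)).symm
    show (inner ℝ (x - R x) ((R : 𝔼 →ₗ[ℝ] 𝔼) z) : ℝ) = 0
    rw [show ((R : 𝔼 →ₗ[ℝ] 𝔼) z) = R z from rfl, h1, hRsa.adjoint_eq, h0, inner_zero_left]
  -- trace argument
  have htrace : Continuous (fun T : 𝔼 →L[ℝ] 𝔼 =>
      LinearMap.trace ℝ 𝔼 (T : 𝔼 →ₗ[ℝ] 𝔼)) :=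
    LinearMap.continuous_of_finiteDimensional
      ((LinearMap.trace ℝ 𝔼).comp (ContinuousLinearMap.coeLM ℝ))
  have htr1 : Tendsto (fun j => LinearMap.trace ℝ 𝔼 ((P j : 𝔼 →ₗ[ℝ] 𝔼))) atTop
      (𝓝 (LinearMap.trace ℝ 𝔼 (R : 𝔼 →ₗ[ℝ] 𝔼))) := (htrace.tendsto R).comp hR
  have htr2 : ∀ j, LinearMap.trace ℝ 𝔼 ((P j : 𝔼 →ₗ[ℝ] 𝔼)) = (d : ℝ) := fun j => by
    rw [hPdef]; rw [trace_projCLM, hdk]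
  have htrR : LinearMap.trace ℝ 𝔼 (R : 𝔼 →ₗ[ℝ] 𝔼) = (d : ℝ) := by
    have hconst : Tendsto (fun j => LinearMap.trace ℝ 𝔼 ((P j : 𝔼 →ₗ[ℝ] 𝔼))) atTop
        (𝓝 (d : ℝ)) := by
      rw [funext htr2]
      exact tendsto_const_nhds
    exact tendsto_nhds_unique htr1 hconst
  have hfinM : Module.finrank ℝ M = d := by
    have : (Module.finrank ℝ M : ℝ) = (d : ℝ) := by
      rw [← trace_projCLM M, hproj, htrR]
    exact_mod_cast this
  -- A L ≤ M
  have hle : Submodule.map ((A : 𝔼 →ₗ[ℝ] 𝔼)) L ≤ M := by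
    rintro _ ⟨u, hu, rfl⟩
    have hPk : Tendsto (fun j => projCLM (Lk j)) atTop (𝓝 (projCLM L)) :=
      tendsto_projCLM_of_dZ hL
    have hu1 : Tendsto (fun j => projCLM (Lk j) u) atTop (𝓝 (projCLM L u)) :=
      tendsto_apply_clm hPk tendsto_const_nhds
    rw [projCLM_apply_of_mem L hu] at hu1
    have hv : Tendsto (fun j => Ak j (projCLM (Lk j) u)) atTop (𝓝 (A u)) :=
      tendsto_apply_clm hA hu1
    have hfix : ∀ j, P j (Ak j (projCLM (Lk j) u)) = Ak j (projCLM (Lk j) u) := fun j =>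
      projCLM_apply_of_mem _ ⟨projCLM (Lk j) u, projCLM_apply_mem _ _, rfl⟩
    have h5 : Tendsto (fun j => P j (Ak j (projCLM (Lk j) u))) atTop (𝓝 (R (A u))) :=
      tendsto_apply_clm hR hv
    have h6 : Tendsto (fun j => P j (Ak j (projCLM (Lk j) u))) atTop (𝓝 (A u)) := by
      simpa [hfix] using hv
    have h7 : R (A u) = A u := tendsto_nhds_unique h5 h6
    exact ⟨A u, h7⟩
  have hMeq : Submodule.map ((A : 𝔼 →ₗ[ℝ] 𝔼)) L = M :=
    Submodule.eq_of_le_of_finrank_eq hle (by rw [hdL, hfinM])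
  rw [← hMeq] at hproj
  exact hproj.symm

lemma tendsto_dZ_map {d : ℕ} {Ak : ℕ → (𝔼 →L[ℝ] 𝔼)} {A : 𝔼 →L[ℝ] 𝔼}
    (hA : Tendsto Ak atTop (𝓝 A))
    {Lk : ℕ → Submodule ℝ 𝔼} {L : Submodule ℝ 𝔼}
    (hdk : ∀ k, Module.finrank ℝ (Submodule.map ((Ak k : 𝔼 →ₗ[ℝ] 𝔼)) (Lk k)) = d)
    (hdL : Module.finrank ℝ (Submodule.map ((A : 𝔼 →ₗ[ℝ] 𝔼)) L) = d)
    (hL : Tendsto (fun k => dZ (Lk k) L) atTop (𝓝 0)) :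
    Tendsto (fun k => dZ (Submodule.map ((Ak k : 𝔼 →ₗ[ℝ] 𝔼)) (Lk k))
      (Submodule.map ((A : 𝔼 →ₗ[ℝ] 𝔼)) L)) atTop (𝓝 0) := by
  have main : Tendsto (fun k => projCLM (Submodule.map ((Ak k : 𝔼 →ₗ[ℝ] 𝔼)) (Lk k))) atTop
      (𝓝 (projCLM (Submodule.map ((A : 𝔼 →ₗ[ℝ] 𝔼)) L))) := by
    apply tendsto_of_subseq_tendsto
    intro ns hns
    have hball : ∀ k, projCLM (Submodule.map ((Ak (ns k) : 𝔼 →ₗ[ℝ] 𝔼)) (Lk (ns k)))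
        ∈ Metric.closedBall (0 : 𝔼 →L[ℝ] 𝔼) 1 := fun k => by
      rw [Metric.mem_closedBall, dist_zero_right]
      exact norm_projCLM_le _
    obtain ⟨R, -, φ, hφ, hconv⟩ :=
      (isCompact_closedBall (0 : 𝔼 →L[ℝ] 𝔼) 1).tendsto_subseq hball
    refine ⟨φ, ?_⟩
    have hkey := proj_limit_ident (hA.comp (hns.comp hφ.tendsto_atTop))
      (fun j => hdk (ns (φ j))) hdL (hL.comp (hns.comp hφ.tendsto_atTop)) hconv
    rw [← hkey]
    exact hconv
  exact tendsto_iff_norm_sub_tendsto_zero.mp main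

end DZconv

section SCImage

variable {α β : Type*} [Fintype α] [Fintype β]

lemma tangentCone_phiF_eq {g : EuclideanSpace ℝ α → EuclideanSpace ℝ β} (hg : ContDiff ℝ 1 g)
    (S : Set (EuclideanSpace ℝ (α ⊕ β))) (w : EuclideanSpace ℝ (α ⊕ β)) :
    tangentConeAt ℝ (phiF g '' S) (phiF g w)
      = (shearCLM (fderiv ℝ g (p1 w))) '' tangentConeAt ℝ S w := by
  set D := fderiv ℝ g (p1 w) with hD
  have hΦ : HasFDerivAt (phiF g) (shearCLM D) w :=
    hasFDerivAt_phiF ((hg.differentiable one_ne_zero) (p1 w)).hasFDerivAt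
  have hg' : HasFDerivAt (fun x => -(g x)) (-D) (p1 (phiF g w)) := by
    rw [p1_phiF]
    exact (((hg.differentiable one_ne_zero) (p1 w)).hasFDerivAt).neg
  have hΨ : HasFDerivAt (phiF (fun x => -(g x))) (shearCLM (-D)) (phiF g w) :=
    hasFDerivAt_phiF hg'
  exact tangentCone_image_eq hΦ hΨ (phiF_neg_phiF g)
    (fun v => shear_shear_neg D v)

lemma SC_image {g : EuclideanSpace ℝ α → EuclideanSpace ℝ β} (hg : ContDiff ℝ 1 g)
    (S : Set (EuclideanSpace ℝ (α ⊕ β))) (w₀ : EuclideanSpace ℝ (α ⊕ β)) (d : ℕ)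
    {L : Submodule ℝ (EuclideanSpace ℝ (α ⊕ β))} (hL : L ∈ SCderivSet S w₀ d) :
    Submodule.map (shearMap (fderiv ℝ g (p1 w₀))) L ∈ SCderivSet (phiF g '' S) (phiF g w₀) d := by
  obtain ⟨hrk, wk, Lk, hprop, hwk, hdZ⟩ := hL
  set D := fderiv ℝ g (p1 w₀) with hD
  refine ⟨by rw [finrank_map_shear]; exact hrk,
    fun k => phiF g (wk k),
    fun k => Submodule.map (shearMap (fderiv ℝ g (p1 (wk k)))) (Lk k), fun k => ?_, ?_, ?_⟩
  · obtain ⟨hmem, hrkk, htan⟩ := hprop k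
    refine ⟨⟨wk k, hmem, rfl⟩, by rw [finrank_map_shear]; exact hrkk, ?_⟩
    -- tangent cone condition
    rw [tangentCone_phiF_eq hg S (wk k), ← htan]
    show (Submodule.map (shearMap (fderiv ℝ g (p1 (wk k)))) (Lk k) : Set _)
      = (shearCLM (fderiv ℝ g (p1 (wk k)))) '' (Lk k : Set _)
    rw [Submodule.map_coe]
    rfl
  · exact (continuous_phiF (hg.continuous)).continuousAt.tendsto.comp hwk
  · -- dZ convergence
    have hcont : Continuous fun w : EuclideanSpace ℝ (α ⊕ β) => shearCLM (fderiv ℝ g (p1 w)) := by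
      have h1 : Continuous fun w : EuclideanSpace ℝ (α ⊕ β) => fderiv ℝ g (p1 w) :=
        (hg.continuous_fderiv one_ne_zero).comp (p1CLM α β).continuous
      have hlin : Continuous fun D' : EuclideanSpace ℝ α →L[ℝ] EuclideanSpace ℝ β =>
          (inr2CLM α β).comp (D'.comp (p1CLM α β)) := by
        have hout := ((ContinuousLinearMap.compL ℝ (EuclideanSpace ℝ (α ⊕ β))
          (EuclideanSpace ℝ β) (EuclideanSpace ℝ (α ⊕ β))) (inr2CLM α β)).continuous
        have hin := (((ContinuousLinearMap.compL ℝ (EuclideanSpace ℝ (α ⊕ β))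
          (EuclideanSpace ℝ α) (EuclideanSpace ℝ β)).flip (p1CLM α β))).continuous
        exact hout.comp hin
      have h2 : Continuous fun D' : EuclideanSpace ℝ α →L[ℝ] EuclideanSpace ℝ β =>
          shearCLM D' := by
        have heq : (fun D' : EuclideanSpace ℝ α →L[ℝ] EuclideanSpace ℝ β => shearCLM D')
            = fun D' => ContinuousLinearMap.id ℝ (EuclideanSpace ℝ (α ⊕ β))
              + (inr2CLM α β).comp (D'.comp (p1CLM α β)) := by
          funext D'
          refine ContinuousLinearMap.ext fun v => ?_
          ext s
          cases s with
          | inl i => show v (Sum.inl i) = v (Sum.inl i) + (0 : ℝ); ring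
          | inr j => show D' (p1 v) j + v (Sum.inr j) = v (Sum.inr j) + D' (p1 v) j; ring
        rw [heq]
        exact continuous_const.add hlin
      exact h2.comp h1
    have hA : Tendsto (fun k => shearCLM (fderiv ℝ g (p1 (wk k)))) atTop (𝓝 (shearCLM D)) :=
      (hcont.tendsto w₀).comp hwk
    have := tendsto_dZ_map hA
      (Lk := Lk) (L := L) (d := d)
      (fun k => by rw [shearCLM_coe, finrank_map_shear]; exact (hprop k).2.1)
      (by rw [shearCLM_coe, finrank_map_shear]; exact hrk) hdZ
    simpa only [shearCLM_coe] using this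

lemma SCderiv_image_eq {g : EuclideanSpace ℝ α → EuclideanSpace ℝ β} (hg : ContDiff ℝ 1 g)
    (S : Set (EuclideanSpace ℝ (α ⊕ β))) (w₀ : EuclideanSpace ℝ (α ⊕ β)) (d : ℕ) :
    SCderivSet (phiF g '' S) (phiF g w₀) d
      = Submodule.map (shearMap (fderiv ℝ g (p1 w₀))) '' SCderivSet S w₀ d := by
  apply Set.Subset.antisymm
  · intro L' hL'
    have h2 := SC_image (hg.neg) (phiF g '' S) (phiF g w₀) d hL'
    have h3 : phiF (fun x => -(g x)) '' (phiF g '' S) = S := by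
      rw [Set.image_image]
      simp only [phiF_neg_phiF, Set.image_id']
    have h4 : fderiv ℝ (fun x => -(g x)) (p1 (phiF g w₀)) = -(fderiv ℝ g (p1 w₀)) := by
      rw [p1_phiF, fderiv_fun_neg]
    rw [h3, phiF_neg_phiF, h4] at h2
    refine ⟨Submodule.map (shearMap (-(fderiv ℝ g (p1 w₀)))) L', h2, ?_⟩
    rw [map_shear_map_neg_shear]
  · rintro _ ⟨L, hL, rfl⟩
    exact SC_image hg S w₀ d hL

end SCImage

section Adjoint

variable {α β : Type*} [Fintype α] [Fintype β]

lemma inner_split {γ δ : Type*} [Fintype γ] [Fintype δ] (x y : EuclideanSpace ℝ (γ ⊕ δ)) :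
    (inner ℝ x y : ℝ) = (inner ℝ (p1 x) (p1 y) : ℝ) + (inner ℝ (p2 x) (p2 y) : ℝ) := by
  simp only [PiLp.inner_apply, RCLike.inner_apply, starRingEnd_apply, star_trivial]
  rw [Fintype.sum_sum_type]
  rfl

lemma key_inner (D : EuclideanSpace ℝ α →L[ℝ] EuclideanSpace ℝ β)
    (u : EuclideanSpace ℝ (α ⊕ β)) (w : EuclideanSpace ℝ (β ⊕ α)) :
    (inner ℝ (shearMap D u) (swapNeg α β w) : ℝ)
      = inner ℝ u (swapNeg α β (shearMap (-(ContinuousLinearMap.adjoint D)) w)) := by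
  rw [inner_split, inner_split]
  have e1 : p1 (shearMap D u) = p1 u := rfl
  have e2 : p2 (shearMap D u) = D (p1 u) + p2 u := rfl
  have e3 : p1 (swapNeg α β w) = p2 w := rfl
  have e4 : p2 (swapNeg α β w) = -(p1 w) := rfl
  have e5 : p1 (swapNeg α β (shearMap (-(ContinuousLinearMap.adjoint D)) w))
      = (-(ContinuousLinearMap.adjoint D)) (p1 w) + p2 w := rfl
  have e6 : p2 (swapNeg α β (shearMap (-(ContinuousLinearMap.adjoint D)) w))
      = -(p1 w) := rfl
  rw [e1, e2, e3, e4, e5, e6]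
  have hadj : (inner ℝ (p1 u) ((ContinuousLinearMap.adjoint D) (p1 w)) : ℝ)
      = inner ℝ (D (p1 u)) (p1 w) := ContinuousLinearMap.adjoint_inner_right D (p1 u) (p1 w)
  simp only [inner_add_left, inner_add_right, inner_neg_left, inner_neg_right,
    ContinuousLinearMap.neg_apply, hadj]
  ring

lemma adjSub_map_shear (D : EuclideanSpace ℝ α →L[ℝ] EuclideanSpace ℝ β)
    (L : Submodule ℝ (EuclideanSpace ℝ (α ⊕ β))) :
    adjSub (Submodule.map (shearMap D) L)
      = Submodule.map (shearMap (ContinuousLinearMap.adjoint D)) (adjSub L) := by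
  ext w
  simp only [adjSub, Submodule.mem_comap, Submodule.mem_map]
  constructor
  · intro hw
    have hw' : ∀ u ∈ L, (inner ℝ (shearMap D u) (swapNeg α β w) : ℝ) = 0 := fun u hu =>
      (Submodule.mem_orthogonal _ _).mp hw _ ⟨u, hu, rfl⟩
    refine ⟨shearMap (-(ContinuousLinearMap.adjoint D)) w, ?_, shear_shear_neg _ w⟩
    refine (Submodule.mem_orthogonal _ _).mpr fun u hu => ?_
    rw [← key_inner D u w]
    exact hw' u hu
  · rintro ⟨w', hw', rfl⟩
    refine (Submodule.mem_orthogonal _ _).mpr ?_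
    rintro _ ⟨u, hu, rfl⟩
    rw [key_inner D u (shearMap (ContinuousLinearMap.adjoint D) w'),
      shear_neg_shear]
    exact (Submodule.mem_orthogonal _ _).mp hw' u hu

end Adjoint
/-- Lemma 2.16: SC derivatives of `F = f + Q`. If `Q` has the SCD property at `((x,y), z)` and
`f` is `C¹`, then `F = f + Q` has the SCD property at `((x,y), f(x,y) + z)`, with
`𝒮F = {[[I,0],[∇f,I]]·L | L ∈ 𝒮Q}` and `𝒮*F = {[[I,0],[∇fᵀ,I]]·L* | L* ∈ 𝒮*Q}`.
Here the base variable `(x, y) ∈ ℝⁿ × ℝᵐ` is modelled on the index type `Fin n ⊕ Fin m`. -/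
theorem scderiv_sum_rule {n m : ℕ}
    (Q : EuclideanSpace ℝ (Fin n ⊕ Fin m) → Set (EuclideanSpace ℝ (Fin m)))
    (hQ : IsClosed {w : EuclideanSpace ℝ ((Fin n ⊕ Fin m) ⊕ Fin m) |
        ∃ b z', z' ∈ Q b ∧ w = emb b z'})
    (f : EuclideanSpace ℝ (Fin n ⊕ Fin m) → EuclideanSpace ℝ (Fin m))
    (hf : ContDiff ℝ 1 f)
    (b : EuclideanSpace ℝ (Fin n ⊕ Fin m)) (z : EuclideanSpace ℝ (Fin m)) (hz : z ∈ Q b)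
    (hSCD : (SCderivSet {w | ∃ b' z', z' ∈ Q b' ∧ w = emb b' z'} (emb b z) (n + m)).Nonempty) :
    (SCderivSet {w | ∃ b' z', z' ∈ Q b' ∧ w = emb b' (f b' + z')}
        (emb b (f b + z)) (n + m)).Nonempty ∧
    SCderivSet {w | ∃ b' z', z' ∈ Q b' ∧ w = emb b' (f b' + z')} (emb b (f b + z)) (n + m)
      = (Submodule.map (shearMap (fderiv ℝ f b))) ''
          (SCderivSet {w | ∃ b' z', z' ∈ Q b' ∧ w = emb b' z'} (emb b z) (n + m)) ∧
    adjSCderivSet {w | ∃ b' z', z' ∈ Q b' ∧ w = emb b' (f b' + z')} (emb b (f b + z)) (n + m)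
      = (Submodule.map (shearMap (ContinuousLinearMap.adjoint (fderiv ℝ f b)))) ''
          (adjSCderivSet {w | ∃ b' z', z' ∈ Q b' ∧ w = emb b' z'} (emb b z) (n + m)) := by
  classical
  set S : Set (EuclideanSpace ℝ ((Fin n ⊕ Fin m) ⊕ Fin m)) :=
    {w | ∃ b' z', z' ∈ Q b' ∧ w = emb b' z'} with hS
  have hgr : {w : EuclideanSpace ℝ ((Fin n ⊕ Fin m) ⊕ Fin m) |
      ∃ b' z', z' ∈ Q b' ∧ w = emb b' (f b' + z')} = phiF f '' S := by
    ext w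
    constructor
    · rintro ⟨b', z', hz', rfl⟩
      exact ⟨emb b' z', ⟨b', z', hz', rfl⟩, phiF_emb f b' z'⟩
    · rintro ⟨-, ⟨b', z', hz', rfl⟩, rfl⟩
      exact ⟨b', z', hz', phiF_emb f b' z'⟩
  have hpt : emb b (f b + z) = phiF f (emb b z) := (phiF_emb f b z).symm
  have hpart2 : SCderivSet {w | ∃ b' z', z' ∈ Q b' ∧ w = emb b' (f b' + z')}
      (emb b (f b + z)) (n + m)
      = (Submodule.map (shearMap (fderiv ℝ f b))) '' (SCderivSet S (emb b z) (n + m)) := by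
    rw [hgr, hpt]
    have h := SCderiv_image_eq hf S (emb b z) (n + m)
    rwa [p1_emb] at h
  refine ⟨?_, hpart2, ?_⟩
  · rw [hpart2]
    exact hSCD.image _
  · ext M
    simp only [adjSCderivSet, Set.mem_setOf_eq, Set.mem_image]
    constructor
    · rintro ⟨L', hL', rfl⟩
      rw [hpart2] at hL'
      obtain ⟨L, hL, rfl⟩ := hL'
      exact ⟨adjSub L, ⟨L, hL, rfl⟩, (adjSub_map_shear (fderiv ℝ f b) L).symm⟩
    · rintro ⟨M', ⟨L, hL, rfl⟩, rfl⟩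
      refine ⟨Submodule.map (shearMap (fderiv ℝ f b)) L, ?_, (adjSub_map_shear (fderiv ℝ f b) L).symm⟩
      rw [hpart2]
      exact ⟨L, hL, rfl⟩
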